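/- The Jacobian determinant (2y + 2xy² + x)² + x²(2y² + 3)² of the map ψ(x,y) = ((xy² + x + y)(x - y), (xy + 1)² + x²) vanishes only at (x,y) = (0,0). -/
import Mathlib


theorem psi_jacobian_vanishes_only_at_origin (x y : ℝ) :
    (2 * y + 2 * x * y ^ 2 + x) ^ 2 + x ^ 2 * (2 * y ^ 2 + 3) ^ 2 = 0 ↔
      x = 0 ∧ y = 0 := by
  constructor
  · intro h
    have h1 : (2 * y + 2 * x * y ^ 2 + x) ^ 2 = 0 ∧ x ^ 2 * (2 * y ^ 2 + 3) ^ 2 = 0 := by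
      constructor <;> nlinarith [sq_nonneg (2 * y + 2 * x * y ^ 2 + x), sq_nonneg x, sq_nonneg (2 * y ^ 2 + 3), mul_nonneg (sq_nonneg x) (sq_nonneg (2 * y ^ 2 + 3))]
    have hx : x = 0 := by
      have := h1.2
      have h3 : (2 * y ^ 2 + 3) ^ 2 > 0 := by positivity
      have : x ^ 2 = 0 := by
        by_contra hc
        have : x ^ 2 > 0 := lt_of_le_of_ne (sq_nonneg x) (Ne.symm hc)
        nlinarith
      exact pow_eq_zero_iff (n := 2) (by norm_num) |>.mp this
    subst hx
    have := h1.1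
    have : 2 * y = 0 := by nlinarith
    exact ⟨rfl, by linarith⟩
  · rintro ⟨rfl, rfl⟩; ring
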